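/- For any positive integer r, the determinant of the r×r matrix whose (i,j) entry is the Pochhammer symbol (j-i+2)_{i-1} equals the product over i from 1 to r-1 of i!. -/

import Mathlib

/-- The Pochhammer symbol `(x)_k = x(x+1)⋯(x+k-1)`, `(x)_0 = 1`. -/
def poch (x : ℚ) (k : ℕ) : ℚ := ∏ i ∈ Finset.range k, (x + i)

lemma poch_eq_ascPochhammer (x : ℚ) (k : ℕ) :
    poch x k = (ascPochhammer ℚ k).eval x := by
  induction k with
  | zero => simp [poch]
  | succ n ih =>
    rw [ascPochhammer_succ_eval, ← ih, poch, poch, Finset.prod_range_succ]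

/-- For a positive integer `r`, the determinant of the `r × r` matrix with `(i,j)` entry
`(j - i + 2)_{i-1}` (rows and columns indexed `1, …, r`) equals `∏_{i=1}^{r-1} i!`.
Here rows/columns are indexed by `Fin r` (0-based), so the entry at `(i,j)` is
`(j - i + 2)_{i}` with the 0-based values, matching the 1-based `(j-i+2)_{i-1}`. -/
theorem det_poch_matrix (r : ℕ) (hr : 0 < r) :
    Matrix.det (Matrix.of fun i j : Fin r =>
        poch (((j : ℕ) : ℚ) - ((i : ℕ) : ℚ) + 2) (i : ℕ)) =
      ∏ i ∈ Finset.range r, (Nat.factorial i : ℚ) := by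
  obtain ⟨n, rfl⟩ := Nat.exists_eq_add_of_lt hr
  rw [zero_add]
  have h1 : (Matrix.of fun i j : Fin (n + 1) =>
      poch (((j : ℕ) : ℚ) - ((i : ℕ) : ℚ) + 2) (i : ℕ)) =
      (Matrix.of fun i j : Fin (n + 1) =>
        (descPochhammer ℚ (j : ℕ)).eval (((i : ℕ) : ℚ) + 1)).transpose := by
    ext i j
    simp only [Matrix.of_apply, Matrix.transpose_apply]
    rw [descPochhammer_eval_eq_ascPochhammer, poch_eq_ascPochhammer]
    ring_nf
  rw [h1, Matrix.det_transpose,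
    ← Matrix.det_eval_matrixOfPolynomials_eq_det_vandermonde
      (fun i : Fin (n + 1) => ((i : ℕ) : ℚ) + 1)
      (fun j : Fin (n + 1) => descPochhammer ℚ (j : ℕ))
      (fun j => descPochhammer_natDegree ℚ _)
      (fun j => monic_descPochhammer ℚ _)]
  have h2 : (Matrix.vandermonde fun i : Fin (n + 1) => ((i : ℕ) : ℚ) + 1).det =
      (Matrix.vandermonde fun i : Fin (n + 1) => ((i : ℕ) : ℚ)).det := by
    rw [Matrix.det_vandermonde, Matrix.det_vandermonde]
    congr 1; ext i; congr 1; ext j; ring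
  rw [h2, Matrix.det_vandermonde_id_eq_superFactorial (R := ℚ) n, ← Nat.prod_range_succ_factorial n]
  push_cast
  rfl
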